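/- Let A = A_q^a be a quantum complete intersection over a field k. If ∏_{i=1}^{c} q_{iw}^{a_i − 1} = 1 for every w with 1 ≤ w ≤ c, then A is a symmetric algebra: the functional φ taking the coefficient of x_c^{a_c−1}⋯x_1^{a_1−1} in the monomial basis satisfies φ(xy) = φ(yx) for all x, y ∈ A, and the bilinear form (x,y) ↦ φ(xy) is nondegenerate. -/

import Mathlib

/-!
If `∏_i q_{iw}^{a_i-1} = 1` for every `w`, then the quantum complete intersection
`A_q^a` is a symmetric algebra: the socle-coefficient functional `φ` is a trace form
(`φ(xy) = φ(yx)`) with nondegenerate associated bilinear form.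
-/

noncomputable section

/-- The defining relations of the quantum complete intersection `A_q^a`:
`X_i ^ (a i) = 0` and `X_i * X_j = q i j • (X_j * X_i)`. -/
def qciRel (k : Type) [Field k] (c : ℕ) (q : Fin c → Fin c → k) (a : Fin c → ℕ) :
    FreeAlgebra k (Fin c) → FreeAlgebra k (Fin c) → Prop := fun x y =>
  (∃ i, x = FreeAlgebra.ι k i ^ a i ∧ y = 0) ∨
  (∃ i j, x = FreeAlgebra.ι k i * FreeAlgebra.ι k j ∧
    y = q i j • (FreeAlgebra.ι k j * FreeAlgebra.ι k i))

/-- The quantum complete intersection `A_q^a = k⟨X_1,…,X_c⟩/(X_i^{a_i}, X_iX_j - q_{ij}X_jX_i)`. -/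
abbrev QCI (k : Type) [Field k] (c : ℕ) (q : Fin c → Fin c → k) (a : Fin c → ℕ) : Type :=
  RingQuot (qciRel k c q a)

/-- The generator `x_i` of `A_q^a` (the image of `X_i`). -/
def qciX (k : Type) [Field k] {c : ℕ} (q : Fin c → Fin c → k) (a : Fin c → ℕ) (i : Fin c) :
    QCI k c q a :=
  RingQuot.mkAlgHom k (qciRel k c q a) (FreeAlgebra.ι k i)

/-- The descending monomial `x_c^{d_c} ⋯ x_1^{d_1}` in `A_q^a`. -/
def qciDMono (k : Type) [Field k] {c : ℕ} (q : Fin c → Fin c → k) (a : Fin c → ℕ)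
    (d : (i : Fin c) → Fin (a i)) : QCI k c q a :=
  (List.ofFn fun w : Fin c => qciX k q a w.rev ^ (d w.rev : ℕ)).prod

namespace QciProof

variable {k : Type} [Field k] {c : ℕ} {q : Fin c → Fin c → k} {a : Fin c → ℕ}

lemma X_pow_a (q : Fin c → Fin c → k) (a : Fin c → ℕ) (i : Fin c) :
    qciX k q a i ^ a i = 0 := by
  have h := RingQuot.mkAlgHom_rel k (s := qciRel k c q a)
    (Or.inl ⟨i, rfl, rfl⟩ : qciRel k c q a (FreeAlgebra.ι k i ^ a i) 0)
  simpa [qciX, map_pow] using h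

lemma X_comm (q : Fin c → Fin c → k) (a : Fin c → ℕ) (i j : Fin c) :
    qciX k q a i * qciX k q a j = q i j • (qciX k q a j * qciX k q a i) := by
  have h := RingQuot.mkAlgHom_rel k (s := qciRel k c q a)
    (Or.inr ⟨i, j, rfl, rfl⟩ :
      qciRel k c q a (FreeAlgebra.ι k i * FreeAlgebra.ι k j)
        (q i j • (FreeAlgebra.ι k j * FreeAlgebra.ι k i)))
  simpa [qciX, map_mul, map_smul] using h

lemma X_comm_pow (q : Fin c → Fin c → k) (a : Fin c → ℕ) (i j : Fin c) (n : ℕ) :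
    qciX k q a i * qciX k q a j ^ n = q i j ^ n • (qciX k q a j ^ n * qciX k q a i) := by
  induction n with
  | zero => simp
  | succ n ih =>
    rw [pow_succ, ← mul_assoc, ih, smul_mul_assoc, mul_assoc, X_comm q a i j,
      mul_smul_comm, smul_smul, ← pow_succ, pow_succ, mul_assoc]

lemma X_pow_comm (q : Fin c → Fin c → k) (a : Fin c → ℕ) (i j : Fin c) (m n : ℕ) :
    qciX k q a i ^ m * qciX k q a j ^ n
      = q i j ^ (m * n) • (qciX k q a j ^ n * qciX k q a i ^ m) := by
  induction m with
  | zero => simp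
  | succ m ih =>
    rw [pow_succ, mul_assoc, X_comm_pow q a i j n, mul_smul_comm, ← mul_assoc, ih,
      smul_mul_assoc, smul_smul, ← pow_add, mul_assoc, ← pow_succ]
    ring_nf

/-- The descending list of indices `[n-1, …, 1, 0]` in `Fin c`. -/
def dl (c : ℕ) : (n : ℕ) → n ≤ c → List (Fin c)
  | 0, _ => []
  | n + 1, h => ⟨n, h⟩ :: dl c n (Nat.le_of_succ_le h)

lemma mem_dl {n : ℕ} (h : n ≤ c) (w : Fin c) : w ∈ dl c n h ↔ (w : ℕ) < n := by
  induction n with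
  | zero => simp [dl]
  | succ n ih => simp [dl, List.mem_cons, ih, Fin.ext_iff]; omega

/-- Product of powers of the generators along a list of indices. -/
def Pl (q : Fin c → Fin c → k) (a : Fin c → ℕ) (l : List (Fin c)) (f : Fin c → ℕ) :
    QCI k c q a :=
  (l.map fun w => qciX k q a w ^ f w).prod

lemma Pl_nil (q : Fin c → Fin c → k) (a : Fin c → ℕ) (f : Fin c → ℕ) :
    Pl q a [] f = 1 := rfl

lemma Pl_cons (q : Fin c → Fin c → k) (a : Fin c → ℕ) (u : Fin c) (t : List (Fin c))
    (f : Fin c → ℕ) : Pl q a (u :: t) f = qciX k q a u ^ f u * Pl q a t f := by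
  simp [Pl]

lemma Pl_mul_X_pow (q : Fin c → Fin c → k) (a : Fin c → ℕ) (l : List (Fin c))
    (f : Fin c → ℕ) (w : Fin c) (m : ℕ) :
    Pl q a l f * qciX k q a w ^ m
      = ((l.map fun v => q v w ^ (f v * m)).prod) • (qciX k q a w ^ m * Pl q a l f) := by
  induction l with
  | nil => simp [Pl]
  | cons u t ih =>
    simp only [Pl_cons, List.map_cons, List.prod_cons]
    calc qciX k q a u ^ f u * Pl q a t f * qciX k q a w ^ m
        = qciX k q a u ^ f u * (Pl q a t f * qciX k q a w ^ m) := by rw [mul_assoc]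
      _ = qciX k q a u ^ f u *
            ((t.map fun v => q v w ^ (f v * m)).prod • (qciX k q a w ^ m * Pl q a t f)) := by
          rw [ih]
      _ = (t.map fun v => q v w ^ (f v * m)).prod •
            (qciX k q a u ^ f u * qciX k q a w ^ m * Pl q a t f) := by
          rw [mul_smul_comm, mul_assoc]
      _ = (t.map fun v => q v w ^ (f v * m)).prod •
            ((q u w ^ (f u * m) • (qciX k q a w ^ m * qciX k q a u ^ f u)) * Pl q a t f) := by
          rw [X_pow_comm]
      _ = (q u w ^ (f u * m) * (t.map fun v => q v w ^ (f v * m)).prod) •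
            (qciX k q a w ^ m * (qciX k q a u ^ f u * Pl q a t f)) := by
          rw [smul_mul_assoc, smul_smul, mul_assoc, mul_comm (q u w ^ (f u * m))]

/-- The commutation scalar for merging two descending monomials. -/
def Sc (q : Fin c → Fin c → k) : (n : ℕ) → n ≤ c → (Fin c → ℕ) → (Fin c → ℕ) → k
  | 0, _, _, _ => 1
  | n + 1, h, f, g =>
    ((dl c n (Nat.le_of_succ_le h)).map fun v => q v ⟨n, h⟩ ^ (f v * g ⟨n, h⟩)).prod
      * Sc q n (Nat.le_of_succ_le h) f g

lemma Pl_dl_mul (q : Fin c → Fin c → k) (a : Fin c → ℕ) (n : ℕ) (h : n ≤ c)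
    (f g : Fin c → ℕ) :
    Pl q a (dl c n h) f * Pl q a (dl c n h) g
      = Sc q n h f g • Pl q a (dl c n h) (f + g) := by
  induction n with
  | zero => simp [dl, Pl, Sc]
  | succ n ih =>
    have hn := Nat.le_of_succ_le h
    rw [show dl c (n+1) h = ⟨n, h⟩ :: dl c n hn from rfl]
    rw [show Sc q (n+1) h f g =
      ((dl c n hn).map fun v => q v ⟨n, h⟩ ^ (f v * g ⟨n, h⟩)).prod * Sc q n hn f g from rfl]
    simp only [Pl_cons]
    calc qciX k q a ⟨n, h⟩ ^ f ⟨n, h⟩ * Pl q a (dl c n hn) f *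
          (qciX k q a ⟨n, h⟩ ^ g ⟨n, h⟩ * Pl q a (dl c n hn) g)
        = qciX k q a ⟨n, h⟩ ^ f ⟨n, h⟩ *
            ((Pl q a (dl c n hn) f * qciX k q a ⟨n, h⟩ ^ g ⟨n, h⟩) * Pl q a (dl c n hn) g) := by
          rw [mul_assoc, mul_assoc]
      _ = qciX k q a ⟨n, h⟩ ^ f ⟨n, h⟩ *
            ((((dl c n hn).map fun v => q v ⟨n, h⟩ ^ (f v * g ⟨n, h⟩)).prod •
              (qciX k q a ⟨n, h⟩ ^ g ⟨n, h⟩ * Pl q a (dl c n hn) f)) * Pl q a (dl c n hn) g) := by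
          rw [Pl_mul_X_pow]
      _ = ((dl c n hn).map fun v => q v ⟨n, h⟩ ^ (f v * g ⟨n, h⟩)).prod •
            (qciX k q a ⟨n, h⟩ ^ f ⟨n, h⟩ * (qciX k q a ⟨n, h⟩ ^ g ⟨n, h⟩ *
              (Pl q a (dl c n hn) f * Pl q a (dl c n hn) g))) := by
          rw [smul_mul_assoc, mul_smul_comm, mul_assoc]
      _ = ((dl c n hn).map fun v => q v ⟨n, h⟩ ^ (f v * g ⟨n, h⟩)).prod •
            (qciX k q a ⟨n, h⟩ ^ f ⟨n, h⟩ * (qciX k q a ⟨n, h⟩ ^ g ⟨n, h⟩ *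
              (Sc q n hn f g • Pl q a (dl c n hn) (f + g)))) := by
          rw [ih hn]
      _ = (((dl c n hn).map fun v => q v ⟨n, h⟩ ^ (f v * g ⟨n, h⟩)).prod * Sc q n hn f g) •
            (qciX k q a ⟨n, h⟩ ^ (f + g) ⟨n, h⟩ * Pl q a (dl c n hn) (f + g)) := by
          rw [mul_smul_comm, mul_smul_comm, smul_smul, ← mul_assoc, ← pow_add, Pi.add_apply]
lemma X_pow_zero (q : Fin c → Fin c → k) (a : Fin c → ℕ) {i : Fin c} {m : ℕ}
    (h : a i ≤ m) : qciX k q a i ^ m = 0 := by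
  calc qciX k q a i ^ m = qciX k q a i ^ (a i) * qciX k q a i ^ (m - a i) := by
        rw [← pow_add]; congr 1; omega
    _ = 0 := by rw [X_pow_a, zero_mul]

lemma Pl_eq_zero (q : Fin c → Fin c → k) (a : Fin c → ℕ) {n : ℕ} (h : n ≤ c)
    {f : Fin c → ℕ} {w : Fin c} (hw : (w : ℕ) < n) (hf : a w ≤ f w) :
    Pl q a (dl c n h) f = 0 := by
  induction n with
  | zero => omega
  | succ n ih =>
    have hn := Nat.le_of_succ_le h
    rw [show dl c (n+1) h = ⟨n, h⟩ :: dl c n hn from rfl, Pl_cons]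
    by_cases hwn : (w : ℕ) = n
    · have : w = ⟨n, h⟩ := Fin.ext hwn
      rw [← this, X_pow_zero q a hf, zero_mul]
    · rw [ih hn (by omega), mul_zero]

/-- Conversion between `List.ofFn` over reversed indices and the descending list. -/
lemma dl_map_eq {A : Type} (G : Fin c → A) :
    ∀ (n : ℕ) (h : n ≤ c),
      (dl c n h).map G = List.ofFn (fun w : Fin n => G ⟨n - 1 - (w : ℕ), by omega⟩) := by
  intro n
  induction n with
  | zero => intro h; simp [dl]
  | succ n ih =>
    intro h
    rw [show dl c (n+1) h = ⟨n, h⟩ :: dl c n (Nat.le_of_succ_le h) from rfl, List.map_cons,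
      ih (Nat.le_of_succ_le h), List.ofFn_succ]
    congr 1
    refine congrArg List.ofFn (funext fun i => ?_)
    exact congrArg G (Fin.ext (by simp; omega))

lemma ofFn_rev_eq {A : Type} (G : Fin c → A) :
    (List.ofFn fun w : Fin c => G w.rev) = (dl c c le_rfl).map G := by
  rw [dl_map_eq G c le_rfl]
  refine congrArg List.ofFn (funext fun i => ?_)
  exact congrArg G (Fin.ext (by simp [Fin.rev]; omega))

lemma qciDMono_eq_Pl (q : Fin c → Fin c → k) (a : Fin c → ℕ) (d : (i : Fin c) → Fin (a i)) :
    qciDMono k q a d = Pl q a (dl c c le_rfl) (fun i => (d i : ℕ)) := by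
  unfold qciDMono Pl
  rw [← ofFn_rev_eq (fun w => qciX k q a w ^ ((d w : ℕ)))]
/-- Partial product of a `k`-valued function over the descending list. -/
def PP (F : Fin c → k) (n : ℕ) (h : n ≤ c) : k := ((dl c n h).map F).prod

lemma PP_succ (F : Fin c → k) (n : ℕ) (h : n + 1 ≤ c) :
    PP F (n+1) h = F ⟨n, h⟩ * PP F n (Nat.le_of_succ_le h) := by
  simp [PP, dl]

lemma PP_congr {F F' : Fin c → k} {n : ℕ} (h : n ≤ c)
    (hFF : ∀ u : Fin c, (u : ℕ) < n → F u = F' u) : PP F n h = PP F' n h := by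
  induction n with
  | zero => rfl
  | succ n ih =>
    rw [PP_succ, PP_succ, hFF _ (Nat.lt_succ_self n), ih (Nat.le_of_succ_le h) (fun u hu => hFF u (by omega))]

lemma PP_one {F : Fin c → k} {n : ℕ} (h : n ≤ c)
    (hF : ∀ u : Fin c, (u : ℕ) < n → F u = 1) : PP F n h = 1 := by
  induction n with
  | zero => rfl
  | succ n ih =>
    rw [PP_succ, hF _ (Nat.lt_succ_self n), one_mul, ih (Nat.le_of_succ_le h) (fun u hu => hF u (by omega))]

lemma PP_single {F : Fin c → k} {n : ℕ} (h : n ≤ c) {w : Fin c}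
    (hF : ∀ u : Fin c, u ≠ w → F u = 1) :
    PP F n h = if (w : ℕ) < n then F w else 1 := by
  induction n with
  | zero => rfl
  | succ n ih =>
    rw [PP_succ, ih (Nat.le_of_succ_le h)]
    by_cases hw : (w : ℕ) = n
    · have hww : (⟨n, h⟩ : Fin c) = w := Fin.ext hw.symm
      rw [hww, if_neg (by omega), if_pos (by omega), mul_one]
    · rw [hF ⟨n, h⟩ (by simp [Fin.ext_iff]; omega), one_mul]
      by_cases hlt : (w : ℕ) < n
      · rw [if_pos hlt, if_pos (by omega)]
      · rw [if_neg hlt, if_neg (by omega)]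

lemma PP_ne_zero {F : Fin c → k} {n : ℕ} (h : n ≤ c)
    (hF : ∀ u : Fin c, (u : ℕ) < n → F u ≠ 0) : PP F n h ≠ 0 := by
  induction n with
  | zero => exact one_ne_zero
  | succ n ih =>
    rw [PP_succ]
    exact mul_ne_zero (hF _ (Nat.lt_succ_self n))
      (ih (Nat.le_of_succ_le h) (fun u hu => hF u (by omega)))

lemma PP_inv (F : Fin c → k) (n : ℕ) (h : n ≤ c) :
    PP (fun u => (F u)⁻¹) n h = (PP F n h)⁻¹ := by
  induction n with
  | zero => simp [PP, dl]
  | succ n ih => rw [PP_succ, PP_succ, ih (Nat.le_of_succ_le h), mul_inv]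

lemma PP_full (F : Fin c → k) : PP F c le_rfl = ∏ i : Fin c, F i := by
  rw [PP, ← ofFn_rev_eq F, List.prod_ofFn]
  exact Equiv.prod_comp Fin.revPerm F

/-- Splitting the full product at `w`. -/
lemma PP_split (F : Fin c → k) {n : ℕ} (h : n ≤ c) (w : Fin c) (hw : (w : ℕ) < n) :
    PP F n h = PP (fun u => if w < u then F u else 1) n h * F w
      * PP F (w : ℕ) (le_of_lt (lt_of_lt_of_le hw h)) := by
  induction n with
  | zero => omega
  | succ n ih =>
    by_cases hwn : (w : ℕ) = n
    · subst hwn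
      have hww : (⟨(w : ℕ), h⟩ : Fin c) = w := Fin.ext rfl
      have h2 : PP (fun u => if w < u then F u else 1) ((w : ℕ) + 1) h = 1 := by
        rw [PP_succ, hww, if_neg (lt_irrefl w)]
        rw [PP_one (Nat.le_of_succ_le h) (fun u hu => if_neg (by rw [Fin.lt_def]; omega))]
        exact one_mul 1
      rw [PP_succ, h2, one_mul, hww]
    · have hlt : (w : ℕ) < n := by omega
      rw [PP_succ, PP_succ, ih (Nat.le_of_succ_le h) hlt,
        if_pos (show w < ⟨n, h⟩ from by simp only [Fin.lt_def, Fin.val_mk]; omega)]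
      ring
/-- Indicator exponent function. -/
def dlt (w v : Fin c) : ℕ := if v = w then 1 else 0

lemma Sc_succ (q : Fin c → Fin c → k) (n : ℕ) (h : n + 1 ≤ c) (f g : Fin c → ℕ) :
    Sc q (n+1) h f g
      = PP (fun v => q v ⟨n, h⟩ ^ (f v * g ⟨n, h⟩)) n (Nat.le_of_succ_le h)
        * Sc q n (Nat.le_of_succ_le h) f g := rfl

lemma Sc_ne_zero (q : Fin c → Fin c → k) (hqc : ∀ i j, q i j * q j i = 1)
    (n : ℕ) (h : n ≤ c) (f g : Fin c → ℕ) : Sc q n h f g ≠ 0 := by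
  induction n with
  | zero => exact one_ne_zero
  | succ n ih =>
    rw [Sc_succ]
    refine mul_ne_zero (PP_ne_zero _ (fun u hu => pow_ne_zero _ ?_)) (ih (Nat.le_of_succ_le h))
    exact left_ne_zero_of_mul_eq_one (hqc u ⟨n, h⟩)

lemma Sc_right_delta (q : Fin c → Fin c → k) (w : Fin c) (f : Fin c → ℕ)
    (n : ℕ) (h : n ≤ c) :
    Sc q n h f (dlt w)
      = if hw : (w : ℕ) < n then PP (fun v => q v w ^ f v) (w : ℕ) (by omega) else 1 := by
  induction n with
  | zero => rfl
  | succ n ih =>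
    rw [Sc_succ, ih (Nat.le_of_succ_le h)]
    by_cases hwn : (w : ℕ) = n
    · subst hwn
      have hww : (⟨(w : ℕ), h⟩ : Fin c) = w := Fin.ext rfl
      rw [dif_neg (lt_irrefl _), dif_pos (Nat.lt_succ_self _), mul_one, hww]
      refine PP_congr _ (fun u hu => ?_)
      rw [dlt, if_pos rfl, mul_one]
    · have h0 : dlt w ⟨n, h⟩ = 0 := by rw [dlt, if_neg (by simp [Fin.ext_iff]; omega)]
      rw [h0]
      rw [PP_one (Nat.le_of_succ_le h) (fun u hu => by rw [Nat.mul_zero, pow_zero]), one_mul]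
      by_cases hlt : (w : ℕ) < n
      · rw [dif_pos hlt, dif_pos (by omega)]
      · rw [dif_neg hlt, dif_neg (by omega)]

lemma Sc_left_delta (q : Fin c → Fin c → k) (w : Fin c) (f : Fin c → ℕ)
    (n : ℕ) (h : n ≤ c) :
    Sc q n h (dlt w) f
      = PP (fun u => if w < u then q w u ^ f u else 1) n h := by
  induction n with
  | zero => rfl
  | succ n ih =>
    rw [Sc_succ, ih (Nat.le_of_succ_le h), PP_succ]
    congr 1
    rw [PP_single (Nat.le_of_succ_le h)
      (fun u hu => by rw [dlt, if_neg hu, Nat.zero_mul, pow_zero])]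
    rw [dlt, if_pos rfl, Nat.one_mul]
    by_cases hlt : (w : ℕ) < n
    · rw [if_pos hlt, if_pos (by simp only [Fin.lt_def, Fin.val_mk]; omega)]
    · rw [if_neg hlt, if_neg (by simp only [Fin.lt_def, Fin.val_mk]; omega)]

/-- The key consequence of the hypothesis `h1`. -/
lemma scalar_eq (q : Fin c → Fin c → k) (a : Fin c → ℕ)
    (hqd : ∀ i, q i i = 1) (hqc : ∀ i j, q i j * q j i = 1)
    (h1 : ∀ w : Fin c, (∏ i : Fin c, q i w ^ (a i - 1)) = 1)
    (w : Fin c) (d : Fin c → ℕ) (hd : ∀ v, v ≠ w → d v = a v - 1) :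
    Sc q c le_rfl d (dlt w) = Sc q c le_rfl (dlt w) d := by
  have hwc : (w : ℕ) < c := w.isLt
  set F : Fin c → k := fun v => q v w ^ (a v - 1) with hF
  have hsplit := PP_split F le_rfl w hwc
  rw [PP_full] at hsplit
  rw [h1 w] at hsplit
  have hFw : F w = 1 := by rw [hF]; simp [hqd w]
  rw [hFw, mul_one] at hsplit
  -- hsplit : 1 = PP (fun u => if w < u then F u else 1) c le_rfl * PP F ↑w _
  have hinv : (PP (fun u => if w < u then F u else 1) c le_rfl)⁻¹
      = PP F (w : ℕ) (le_of_lt hwc) := by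
    exact inv_eq_of_mul_eq_one_right hsplit.symm
  rw [Sc_right_delta, dif_pos hwc, Sc_left_delta]
  have hL : PP (fun v => q v w ^ d v) (w : ℕ) (by omega)
      = PP F (w : ℕ) (le_of_lt hwc) := by
    refine PP_congr _ (fun u hu => ?_)
    rw [hd u (by intro e; rw [e] at hu; omega), hF]
  have hR : PP (fun u => if w < u then q w u ^ d u else 1) c le_rfl
      = PP (fun u => (if w < u then F u else 1)⁻¹) c le_rfl := by
    refine PP_congr _ (fun u hu => ?_)
    by_cases hlt : w < u
    · rw [if_pos hlt, if_pos hlt, hF]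
      have : q w u = (q u w)⁻¹ := (inv_eq_of_mul_eq_one_right (hqc u w)).symm
      rw [hd u (by intro e; rw [e] at hlt; exact lt_irrefl _ hlt), this, inv_pow]
    · rw [if_neg hlt, if_neg hlt, inv_one]
  rw [hL, hR, PP_inv, hinv]
lemma Pl_dlt_gen (q : Fin c → Fin c → k) (a : Fin c → ℕ) (w : Fin c) (n : ℕ) (h : n ≤ c) :
    Pl q a (dl c n h) (dlt w) = if (w : ℕ) < n then qciX k q a w else 1 := by
  induction n with
  | zero => rfl
  | succ n ih =>
    rw [show dl c (n+1) h = ⟨n, h⟩ :: dl c n (Nat.le_of_succ_le h) from rfl, Pl_cons,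
      ih (Nat.le_of_succ_le h)]
    by_cases hwn : (w : ℕ) = n
    · subst hwn
      have hww : (⟨(w : ℕ), h⟩ : Fin c) = w := Fin.ext rfl
      rw [hww, if_neg (lt_irrefl _), if_pos (Nat.lt_succ_self _), dlt, if_pos rfl,
        pow_one, mul_one]
    · have h0 : dlt w ⟨n, h⟩ = 0 := by rw [dlt, if_neg (by simp [Fin.ext_iff]; omega)]
      rw [h0, pow_zero, one_mul]
      by_cases hlt : (w : ℕ) < n
      · rw [if_pos hlt, if_pos (by omega)]
      · rw [if_neg hlt, if_neg (by omega)]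

lemma Pl_dlt (q : Fin c → Fin c → k) (a : Fin c → ℕ) (w : Fin c) :
    Pl q a (dl c c le_rfl) (dlt w) = qciX k q a w := by
  rw [Pl_dlt_gen, if_pos w.isLt]

lemma phi_Pl (q : Fin c → Fin c → k) (a : Fin c → ℕ) (ha : ∀ i, 2 ≤ a i)
    (b : Module.Basis ((i : Fin c) → Fin (a i)) k (QCI k c q a))
    (hb : ∀ d, b d = qciDMono k q a d)
    (φ : QCI k c q a →ₗ[k] k)
    (hφ : φ = b.coord fun i => ⟨a i - 1, Nat.sub_lt (by have := ha i; omega) Nat.one_pos⟩)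
    (f : Fin c → ℕ) :
    φ (Pl q a (dl c c le_rfl) f) = if ∀ i, f i = a i - 1 then 1 else 0 := by
  by_cases hbound : ∀ i, f i < a i
  · have hPl : Pl q a (dl c c le_rfl) f = b (fun i => ⟨f i, hbound i⟩) := by
      rw [hb, qciDMono_eq_Pl]
    rw [hPl, hφ, Module.Basis.coord_apply, Module.Basis.repr_self, Finsupp.single_apply]
    by_cases hall : ∀ i, f i = a i - 1
    · rw [if_pos (funext fun i => Fin.ext (hall i)), if_pos hall]
    · rw [if_neg, if_neg hall]
      intro he
      exact hall (fun i => congrArg Fin.val (congrFun he i))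
  · push_neg at hbound
    obtain ⟨i, hi⟩ := hbound
    rw [Pl_eq_zero q a le_rfl i.isLt hi, map_zero, if_neg]
    intro hall
    have := hall i; have := ha i; omega

lemma mem_adjoin (q : Fin c → Fin c → k) (a : Fin c → ℕ) (x : QCI k c q a) :
    x ∈ Algebra.adjoin k (Set.range (qciX k q a)) := by
  obtain ⟨y, rfl⟩ := RingQuot.mkAlgHom_surjective k (qciRel k c q a) x
  induction y using FreeAlgebra.induction with
  | grade0 r =>
    rw [AlgHom.commutes]
    exact Subalgebra.algebraMap_mem _ r
  | grade1 i => exact Algebra.subset_adjoin ⟨i, rfl⟩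
  | mul x y hx hy => rw [map_mul]; exact mul_mem hx hy
  | add x y hx hy => rw [map_add]; exact add_mem hx hy
lemma phi_mul_basis (q : Fin c → Fin c → k) (a : Fin c → ℕ) (ha : ∀ i, 2 ≤ a i)
    (b : Module.Basis ((i : Fin c) → Fin (a i)) k (QCI k c q a))
    (hb : ∀ d, b d = qciDMono k q a d)
    (φ : QCI k c q a →ₗ[k] k)
    (hφ : φ = b.coord fun i => ⟨a i - 1, Nat.sub_lt (by have := ha i; omega) Nat.one_pos⟩)
    (d e : (i : Fin c) → Fin (a i)) :
    φ (b d * b e) = Sc q c le_rfl (fun i => (d i : ℕ)) (fun i => (e i : ℕ))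
      * (if ∀ i, (d i : ℕ) + (e i : ℕ) = a i - 1 then 1 else 0) := by
  rw [hb, hb, qciDMono_eq_Pl, qciDMono_eq_Pl, Pl_dl_mul, map_smul, smul_eq_mul,
    phi_Pl q a ha b hb φ hφ]
  simp only [Pi.add_apply]
end QciProof

open QciProof in
theorem qci_symmetric_of_products_one
    (k : Type) [Field k] (c : ℕ) (hc : 1 ≤ c)
    (q : Fin c → Fin c → k) (a : Fin c → ℕ)
    (hqd : ∀ i, q i i = 1) (hqc : ∀ i j, q i j * q j i = 1) (ha : ∀ i, 2 ≤ a i)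
    -- the descending monomials form a k-basis of A
    (b : Module.Basis ((i : Fin c) → Fin (a i)) k (QCI k c q a))
    (hb : ∀ d, b d = qciDMono k q a d)
    -- φ is the coefficient of the socle monomial x_c^{a_c-1} ⋯ x_1^{a_1-1}
    (φ : QCI k c q a →ₗ[k] k)
    (hφ : φ = b.coord fun i => ⟨a i - 1, by have := ha i; omega⟩)
    -- the condition on the commutators
    (h1 : ∀ w : Fin c, (∏ i : Fin c, q i w ^ (a i - 1)) = 1) :
    (∀ x y : QCI k c q a, φ (x * y) = φ (y * x)) ∧
    (∀ x : QCI k c q a, (∀ y : QCI k c q a, φ (x * y) = 0) → x = 0) ∧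
    (∀ y : QCI k c q a, (∀ x : QCI k c q a, φ (x * y) = 0) → y = 0) := by
  -- trace property on generators
  have hgen : ∀ (w : Fin c) (x : QCI k c q a),
      φ (x * qciX k q a w) = φ (qciX k q a w * x) := by
    intro w
    have hmaps : φ ∘ₗ LinearMap.mulRight k (qciX k q a w)
        = φ ∘ₗ LinearMap.mulLeft k (qciX k q a w) := by
      apply b.ext
      intro d
      simp only [LinearMap.comp_apply, LinearMap.mulRight_apply, LinearMap.mulLeft_apply]
      rw [hb, qciDMono_eq_Pl, ← Pl_dlt q a w, Pl_dl_mul, Pl_dl_mul, map_smul, map_smul,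
        smul_eq_mul, smul_eq_mul, add_comm (dlt w)]
      rw [phi_Pl q a ha b hb φ hφ]
      by_cases hcond : ∀ i, ((fun i => (d i : ℕ)) + dlt w) i = a i - 1
      · rw [if_pos hcond]
        have hd : ∀ v, v ≠ w → (d v : ℕ) = a v - 1 := by
          intro v hv
          have := hcond v
          simp only [Pi.add_apply, dlt, if_neg hv] at this
          omega
        rw [scalar_eq q a hqd hqc h1 w _ hd]
      · rw [if_neg hcond, mul_zero, mul_zero]
    intro x
    simpa using DFunLike.congr_fun hmaps x
  have htr : ∀ x y : QCI k c q a, φ (x * y) = φ (y * x) := by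
    have key : ∀ y : QCI k c q a, ∀ x, φ (x * y) = φ (y * x) := by
      intro y
      induction (mem_adjoin q a y) using Algebra.adjoin_induction with
      | mem z hz =>
        obtain ⟨w, rfl⟩ := hz
        exact hgen w
      | algebraMap r => intro x; rw [Algebra.commutes]
      | add y z hy hz hy' hz' =>
        intro x
        rw [mul_add, add_mul, map_add, map_add, hy' x, hz' x]
      | mul y z hy hz hy' hz' =>
        intro x
        calc φ (x * (y * z)) = φ ((x * y) * z) := by rw [mul_assoc]
          _ = φ (z * (x * y)) := hz' _
          _ = φ ((z * x) * y) := by rw [mul_assoc]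
          _ = φ (y * (z * x)) := hy' _
          _ = φ ((y * z) * x) := by rw [mul_assoc]
    exact fun x y => key y x
  -- nondegeneracy on the left
  have hnd : ∀ x : QCI k c q a, (∀ y : QCI k c q a, φ (x * y) = 0) → x = 0 := by
    intro x hx
    have hrepr : ∀ d₀ : (i : Fin c) → Fin (a i), b.repr x d₀ = 0 := by
      intro d₀
      set e : (i : Fin c) → Fin (a i) :=
        fun i => ⟨a i - 1 - (d₀ i : ℕ), by have := ha i; omega⟩ with he
      have hsum : φ (x * b e)
          = b.repr x d₀ * Sc q c le_rfl (fun i => (d₀ i : ℕ)) (fun i => (e i : ℕ)) := by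
        conv_lhs => rw [← Module.Basis.sum_repr b x, Finset.sum_mul, map_sum]
        have hterm : ∀ d : (i : Fin c) → Fin (a i),
            φ ((b.repr x d • b d) * b e)
              = if d = d₀ then
                  b.repr x d₀ * Sc q c le_rfl (fun i => (d₀ i : ℕ)) (fun i => (e i : ℕ))
                else 0 := by
          intro d
          rw [smul_mul_assoc, map_smul, smul_eq_mul,
            phi_mul_basis q a ha b hb φ hφ d e]
          by_cases hd : d = d₀
          · subst hd
            rw [if_pos rfl, if_pos, mul_one]
            intro i
            have h1' := (d i).isLt
            have := ha i
            simp only [he]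
            omega
          · rw [if_neg hd, if_neg, mul_zero, mul_zero]
            intro hcond
            apply hd
            funext i
            have := hcond i
            have h1' := (d i).isLt
            have h2' := (d₀ i).isLt
            simp only [he] at this
            exact Fin.ext (by omega)
        rw [Finset.sum_congr rfl (fun d _ => hterm d), Finset.sum_ite_eq' Finset.univ d₀,
          if_pos (Finset.mem_univ d₀)]
      rw [hx (b e)] at hsum
      have hS := Sc_ne_zero q hqc c le_rfl (fun i => (d₀ i : ℕ)) (fun i => (e i : ℕ))
      exact (mul_eq_zero.mp hsum.symm).resolve_right hS
    have : b.repr x = 0 := by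
      ext d
      simpa using hrepr d
    exact b.repr.map_eq_zero_iff.mp this
  refine ⟨htr, hnd, ?_⟩
  intro y hy
  apply hnd y
  intro z
  rw [htr y z]
  exact hy z
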